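/- arXiv:2206.09366 — 3 statements merged into one kernel-verified Lean document; each statement's English description precedes it below -/
import Mathlib

section
/- Let X, Y, Z be subsets of Z_p (p prime) and let 1 ≤ c₁ ≤ |X| and 1 ≤ c₂ ≤ |Y| be integers with c₁c₂ ≥ 16|X|. Suppose 8|X| ≤ |Y|, 8|Z| ≤ |Y|, and |Y| < p/2. Then there exist X' ⊆ X with |X'| = c₁ and Y' ⊆ Y with |Y'| = c₂ such that |(X' + Y') \ Z| ≥ 2|X|. -/
open Finset Pointwise

lemma key {G : Type*} [AddCommGroup G] [DecidableEq G]
    (X' Y Z : Finset G) (c₁ N : ℕ) (h1 : 1 ≤ c₁)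
    (hN : 8 * N ≤ Y.card) (hZ : 8 * Z.card ≤ Y.card)
    (hX'c : X'.card = c₁) :
    ∀ k, k ≤ Y.card → ∃ Y' ⊆ Y, Y'.card = k ∧
      (4 * N ≤ 2 * ((X' + Y') \ Z).card ∨ k * c₁ ≤ 2 * ((X' + Y') \ Z).card) := by
  intro k
  induction k with
  | zero =>
    intro _
    exact ⟨∅, empty_subset _, card_empty, Or.inr (by simp)⟩
  | succ k ih =>
    intro hk
    obtain ⟨Y', hY'sub, hY'card, hcase⟩ := ih (le_of_lt (Nat.lt_of_succ_le hk))
    have hYnsub : ¬ Y ⊆ Y' := fun h => by have := card_le_card h; omega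
    set T := (X' + Y') \ Z with hT
    by_cases hbig : 4 * N ≤ 2 * T.card
    · obtain ⟨y, hyY, hyY'⟩ := not_subset.mp hYnsub
      refine ⟨insert y Y', insert_subset hyY hY'sub,
        by rw [card_insert_of_notMem hyY', hY'card], Or.inl ?_⟩
      refine le_trans hbig (Nat.mul_le_mul_left _ (card_le_card ?_))
      exact sdiff_subset_sdiff (add_subset_add_left (subset_insert _ _)) le_rfl
    · have hsmall : 2 * T.card < 4 * N := lt_of_not_ge hbig
      have hkc : k * c₁ ≤ 2 * T.card := hcase.resolve_left hbig
      have hYpos : 0 < Y.card := lt_of_lt_of_le (Nat.lt_of_lt_of_le (Nat.zero_lt_succ k) hk) le_rfl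
      have hYne : Y.Nonempty := card_pos.mp hYpos
      set W := T ∪ Z with hW
      set f : G → ℕ := fun y => ((X' + {y}) \ W).card with hf
      obtain ⟨b, hbY, hbmax⟩ := Y.exists_max_image f hYne
      -- per-element identity
      have hsum1 : ∀ y : G, f y + ((X' + {y}) ∩ W).card = c₁ := by
        intro y
        rw [hf]
        rw [card_sdiff_add_card_inter]
        rw [add_singleton, Finset.card_vadd_finset, hX'c]
      -- bound on intersections
      have hinter : ∀ y : G, ((X' + {y}) ∩ W).card = (X'.filter (fun x => x + y ∈ W)).card := by
        intro y
        rw [show (X' + {y}) ∩ W = (X'.filter (fun x => x + y ∈ W)).image (· + y) from ?_,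
          card_image_of_injective _ (add_left_injective y)]
        ext z
        simp only [mem_inter, mem_image, mem_filter, Finset.mem_add, mem_singleton]
        constructor
        · rintro ⟨⟨x, hx, w, rfl, rfl⟩, hzW⟩
          exact ⟨x, ⟨hx, hzW⟩, rfl⟩
        · rintro ⟨x, ⟨hx, hxW⟩, rfl⟩
          exact ⟨⟨x, hx, y, rfl, rfl⟩, hxW⟩
      have hswap : ∑ y ∈ Y, (X'.filter (fun x => x + y ∈ W)).card
          = ∑ x ∈ X', (Y.filter (fun y => x + y ∈ W)).card := by
        simp only [card_filter]
        exact Finset.sum_comm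
      have hterm : ∀ x ∈ X', (Y.filter (fun y => x + y ∈ W)).card ≤ W.card := by
        intro x _
        apply card_le_card_of_injOn (fun y => x + y)
        · intro y hy; exact (mem_filter.mp hy).2
        · intro a _ b _ h; exact add_left_cancel h
      have hsum2 : ∑ y ∈ Y, ((X' + {y}) ∩ W).card ≤ c₁ * W.card := by
        calc ∑ y ∈ Y, ((X' + {y}) ∩ W).card
            = ∑ x ∈ X', (Y.filter (fun y => x + y ∈ W)).card := by
              rw [← hswap]; exact sum_congr rfl (fun y _ => hinter y)
          _ ≤ ∑ _x ∈ X', W.card := sum_le_sum hterm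
          _ = c₁ * W.card := by rw [sum_const, smul_eq_mul, hX'c]
      have hsumf : ∑ y ∈ Y, f y ≤ Y.card * f b := by
        calc ∑ y ∈ Y, f y ≤ Y.card • f b := sum_le_card_nsmul Y f (f b) hbmax
          _ = Y.card * f b := by rw [smul_eq_mul]
      have htotal : c₁ * Y.card = ∑ y ∈ Y, f y + ∑ y ∈ Y, ((X' + {y}) ∩ W).card := by
        rw [← sum_add_distrib]
        rw [Finset.sum_congr rfl (fun y _ => hsum1 y), sum_const, smul_eq_mul, mul_comm]
      have hWcard : W.card ≤ T.card + Z.card := card_union_le _ _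
      -- main inequality: c₁ ≤ 2 * f b
      have hmain : c₁ ≤ 2 * f b := by
        have h5 : 5 * c₁ * Y.card ≤ 8 * (f b) * Y.card := by
          have h8T : 4 * T.card ≤ Y.card := by omega
          have e1 : c₁ * Y.card ≤ Y.card * f b + c₁ * (T.card + Z.card) := by
            calc c₁ * Y.card = ∑ y ∈ Y, f y + ∑ y ∈ Y, ((X' + {y}) ∩ W).card := htotal
              _ ≤ Y.card * f b + c₁ * W.card := Nat.add_le_add hsumf hsum2
              _ ≤ Y.card * f b + c₁ * (T.card + Z.card) := by
                  exact Nat.add_le_add_left (Nat.mul_le_mul_left _ hWcard) _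
          have e2 : c₁ * (4 * T.card) ≤ c₁ * Y.card := Nat.mul_le_mul_left _ h8T
          have e3 : c₁ * (8 * Z.card) ≤ c₁ * Y.card := Nat.mul_le_mul_left _ hZ
          nlinarith [e1, e2, e3]
        have h5' : 5 * c₁ ≤ 8 * f b := Nat.le_of_mul_le_mul_right h5 hYpos
        omega
      have hfb1 : 1 ≤ f b := by omega
      have hbY' : b ∉ Y' := by
        intro hb
        have hsub : X' + {b} ⊆ W := by
          intro z hz
          have hz' : z ∈ X' + Y' := add_subset_add_left (singleton_subset_iff.mpr hb) hz
          by_cases hzZ : z ∈ Z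
          · exact mem_union_right _ hzZ
          · exact mem_union_left _ (mem_sdiff.mpr ⟨hz', hzZ⟩)
        have : f b = 0 := by
          rw [hf]; simp only
          rw [card_eq_zero, sdiff_eq_empty_iff_subset]
          exact hsub
        omega
      refine ⟨insert b Y', insert_subset hbY hY'sub,
        by rw [card_insert_of_notMem hbY', hY'card], Or.inr ?_⟩
      set A := (X' + {b}) \ W with hA
      have hdisj : Disjoint T A := by
        rw [disjoint_right]
        intro z hzA hzT
        exact (mem_sdiff.mp hzA).2 (mem_union_left _ hzT)
      have hsubset : T ∪ A ⊆ (X' + insert b Y') \ Z := by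
        apply union_subset
        · exact sdiff_subset_sdiff (add_subset_add_left (subset_insert _ _)) le_rfl
        · intro z hz
          obtain ⟨hz1, hz2⟩ := mem_sdiff.mp hz
          refine mem_sdiff.mpr ⟨?_, fun hzZ => hz2 (mem_union_right _ hzZ)⟩
          exact add_subset_add_left (singleton_subset_iff.mpr (mem_insert_self b Y')) hz1
      have hcard : T.card + f b ≤ ((X' + insert b Y') \ Z).card := by
        calc T.card + f b = (T ∪ A).card := (card_union_of_disjoint hdisj).symm
          _ ≤ _ := card_le_card hsubset
      calc (k + 1) * c₁ = k * c₁ + c₁ := by ring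
        _ ≤ 2 * T.card + 2 * f b := Nat.add_le_add hkc hmain
        _ = 2 * (T.card + f b) := by ring
        _ ≤ 2 * ((X' + insert b Y') \ Z).card := Nat.mul_le_mul_left _ hcard

theorem stmt3 (p : ℕ) (hp : p.Prime) (X Y Z : Finset (ZMod p)) (c₁ c₂ : ℕ)
    (h11 : 1 ≤ c₁) (h12 : c₁ ≤ X.card) (h21 : 1 ≤ c₂) (h22 : c₂ ≤ Y.card)
    (hc : 16 * X.card ≤ c₁ * c₂)
    (hXY : 8 * X.card ≤ Y.card) (hZY : 8 * Z.card ≤ Y.card)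
    (hY : (Y.card : ℝ) < (p : ℝ) / 2) :
    ∃ X' ⊆ X, ∃ Y' ⊆ Y, X'.card = c₁ ∧ Y'.card = c₂ ∧
      2 * X.card ≤ ((X' + Y') \ Z).card := by
  obtain ⟨X', hX'sub, hX'card⟩ := Finset.exists_subset_card_eq h12
  obtain ⟨Y', hY'sub, hY'card, hcase⟩ :=
    key X' Y Z c₁ X.card h11 hXY hZY hX'card c₂ h22
  refine ⟨X', hX'sub, Y', hY'sub, hX'card, hY'card, ?_⟩
  have hcc : 16 * X.card ≤ c₂ * c₁ := by rw [mul_comm c₂ c₁]; exact hc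
  rcases hcase with h | h
  · omega
  · linarith
end

section
/- Let X₁, …, X_k, Y₁, …, Y_k, and Z be subsets of Z_p (p prime), and for each i let 1 ≤ c₁ⁱ ≤ |Xᵢ| and 1 ≤ c₂ⁱ ≤ |Yᵢ| be integers with c₁ⁱc₂ⁱ ≥ 16|Xᵢ|. Suppose that for all i we have 16|Xᵢ| ≤ |Yᵢ|, 16|Z| ≤ |Yᵢ|, and |Yᵢ| < p/2. Then there exist subsets Xᵢ' ⊆ Xᵢ with |Xᵢ'| = c₁ⁱ and Yᵢ' ⊆ Yᵢ with |Yᵢ'| = c₂ⁱ such that |(⋃ᵢ (Xᵢ' + Yᵢ')) \ Z| ≥ min(|Y₁|/16, …, |Y_k|/16, 2·Σᵢ|Xᵢ|). -/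
open Finset Pointwise


lemma count_superset {α : Type*} [DecidableEq α] (Y S : Finset α) (t : ℕ)
    (hS : S ⊆ Y) (hc : S.card ≤ t) :
    ((Y.powersetCard t).filter (fun A => S ⊆ A)).card
      = (Y.card - S.card).choose (t - S.card) := by
  rw [← card_sdiff_of_subset hS, ← Finset.card_powersetCard]
  apply Finset.card_nbij' (i := fun A => A \ S) (j := fun B => B ∪ S)
  · intro A hA
    simp only [mem_coe, mem_filter, mem_powersetCard] at hA ⊢
    obtain ⟨⟨hAY, hAc⟩, hSA⟩ := hA
    exact ⟨sdiff_subset_sdiff hAY le_rfl, by rw [card_sdiff_of_subset hSA, hAc]⟩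
  · intro B hB
    simp only [mem_coe, mem_filter, mem_powersetCard] at hB ⊢
    obtain ⟨hBY, hBc⟩ := hB
    have hdisj : Disjoint B S := disjoint_of_subset_left hBY sdiff_disjoint
    refine ⟨⟨union_subset (hBY.trans sdiff_subset) hS, ?_⟩, subset_union_right⟩
    rw [card_union_of_disjoint hdisj, hBc]
    omega
  · intro A hA
    simp only [mem_coe, mem_filter, mem_powersetCard] at hA
    exact sdiff_union_of_subset hA.2
  · intro B hB
    simp only [mem_coe, mem_powersetCard] at hB
    exact union_sdiff_cancel_right (disjoint_of_subset_left hB.1 sdiff_disjoint)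


lemma bonf {α β : Type*} [DecidableEq α] [DecidableEq β] (s : Finset α) (B : α → Finset β) :
    ∑ x ∈ s, ((B x).card : ℚ) - (∑ q ∈ s.offDiag, ((B q.1 ∩ B q.2).card : ℚ)) / 2
      ≤ ((s.biUnion B).card : ℚ) := by
  induction s using Finset.induction_on with
  | empty => simp
  | @insert a s ha ih =>
    rw [Finset.biUnion_insert, Finset.offDiag_insert ha, Finset.sum_union, Finset.sum_union]
    · have hsum1 : ∑ q ∈ ({a} ×ˢ s), ((B q.1 ∩ B q.2).card : ℚ)
          = ∑ x ∈ s, ((B a ∩ B x).card : ℚ) := by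
        rw [Finset.sum_product, Finset.sum_singleton]
      have hsum2 : ∑ q ∈ (s ×ˢ {a}), ((B q.1 ∩ B q.2).card : ℚ)
          = ∑ x ∈ s, ((B a ∩ B x).card : ℚ) := by
        rw [Finset.sum_product_right, Finset.sum_singleton]
        exact Finset.sum_congr rfl fun x _ => by rw [inter_comm]
      have hdistrib : B a ∩ s.biUnion B = s.biUnion fun x => B a ∩ B x := by
        ext z; simp [mem_biUnion]; tauto
      have hinter : ((B a ∩ s.biUnion B).card : ℚ) ≤ ∑ x ∈ s, ((B a ∩ B x).card : ℚ) := by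
        rw [hdistrib]
        exact_mod_cast Nat.cast_le.mpr (Finset.card_biUnion_le)
      have hcu : ((B a ∪ s.biUnion B).card : ℚ) + ((B a ∩ s.biUnion B).card : ℚ)
          = ((B a).card : ℚ) + ((s.biUnion B).card : ℚ) := by
        exact_mod_cast Finset.card_union_add_card_inter (B a) (s.biUnion B)
      rw [Finset.sum_insert ha, hsum1, hsum2]
      linarith
    all_goals
      rw [Finset.disjoint_left]
      rintro ⟨u, v⟩ h1 h2
      simp only [Finset.mem_union, Finset.mem_product, Finset.mem_singleton,
        Finset.mem_offDiag] at h1 h2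
      aesop

lemma sum_filter_le {α : Type*} [DecidableEq α] (Y : Finset α) (t : ℕ) (ht : 1 ≤ t)
    (P : α → Prop) [DecidablePred P] :
    ∑ A ∈ Y.powersetCard t, (A.filter P).card
      ≤ (Y.filter P).card * (Y.card - 1).choose (t - 1) := by
  have key : ∀ A ∈ Y.powersetCard t, (A.filter P).card
      = ∑ y ∈ Y.filter P, if y ∈ A then 1 else 0 := by
    intro A hA
    rw [mem_powersetCard] at hA
    rw [← Finset.card_filter]
    congr 1
    ext y
    simp only [mem_filter]
    exact ⟨fun ⟨h1, h2⟩ => ⟨⟨hA.1 h1, h2⟩, h1⟩, fun ⟨⟨_, h2⟩, h1⟩ => ⟨h1, h2⟩⟩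
  rw [Finset.sum_congr rfl key, Finset.sum_comm]
  have per : ∀ y ∈ Y.filter P,
      (∑ A ∈ Y.powersetCard t, if y ∈ A then 1 else 0) = (Y.card - 1).choose (t - 1) := by
    intro y hy
    rw [mem_filter] at hy
    rw [← Finset.card_filter]
    have := count_superset Y {y} t (singleton_subset_iff.2 hy.1) (by simpa using ht)
    simp only [card_singleton, singleton_subset_iff] at this
    rw [← this]
  rw [Finset.sum_congr rfl per, Finset.sum_const, smul_eq_mul]

lemma sum_filter_pair_le {α : Type*} [DecidableEq α] (Y : Finset α) (t : ℕ) (ht : 2 ≤ t)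
    (g : α → α) (hg : ∀ z, g z ≠ z) :
    ∑ A ∈ Y.powersetCard t, (A.filter (fun z => g z ∈ A)).card
      ≤ Y.card * (Y.card - 2).choose (t - 2) := by
  have key : ∀ A ∈ Y.powersetCard t, (A.filter (fun z => g z ∈ A)).card
      = ∑ y ∈ Y, if y ∈ A ∧ g y ∈ A then 1 else 0 := by
    intro A hA
    rw [mem_powersetCard] at hA
    rw [← Finset.card_filter]
    congr 1
    ext y
    simp only [mem_filter]
    exact ⟨fun ⟨h1, h2⟩ => ⟨hA.1 h1, h1, h2⟩, fun ⟨_, h1, h2⟩ => ⟨h1, h2⟩⟩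
  rw [Finset.sum_congr rfl key, Finset.sum_comm]
  have per : ∀ y ∈ Y,
      (∑ A ∈ Y.powersetCard t, if y ∈ A ∧ g y ∈ A then 1 else 0) ≤ (Y.card - 2).choose (t - 2) := by
    intro y hy
    rw [← Finset.card_filter]
    by_cases hgy : g y ∈ Y
    · have hcard : (insert (g y) {y} : Finset α).card = 2 := by
        rw [card_insert_of_notMem (by simp [hg y]), card_singleton]
      have := count_superset Y (insert (g y) {y}) t
        (by rw [insert_subset_iff, singleton_subset_iff]; exact ⟨hgy, hy⟩) (by omega)
      rw [hcard] at this
      rw [← this]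
      apply Finset.card_le_card
      intro A hA
      simp only [mem_filter, insert_subset_iff, singleton_subset_iff] at hA ⊢
      exact ⟨hA.1, hA.2.2, hA.2.1⟩
    · have : (Y.powersetCard t).filter (fun A => y ∈ A ∧ g y ∈ A) = ∅ := by
        rw [Finset.filter_eq_empty_iff]
        intro A hA
        rw [mem_powersetCard] at hA
        rintro ⟨-, h2⟩
        exact hgy (hA.1 h2)
      rw [this]
      simp
  calc ∑ y ∈ Y, (∑ A ∈ Y.powersetCard t, if y ∈ A ∧ g y ∈ A then 1 else 0)
      ≤ ∑ _y ∈ Y, (Y.card - 2).choose (t - 2) := Finset.sum_le_sum per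
    _ = Y.card * (Y.card - 2).choose (t - 2) := by rw [Finset.sum_const, smul_eq_mul]

lemma numeric2 (s n a cC q2 : ℚ) (hs : 1 ≤ s) (hn : 16 * s ≤ n) (ha1 : 8 * s ≤ a)
    (ha2 : a ≤ 9 * s) (hCn : 8 * cC ≤ n) (hC0 : 0 ≤ cC) (hq2 : q2 ≤ a ^ 2) (hq20 : 0 ≤ q2) :
    2 * s ≤ a - a * cC / n - q2 / (2 * (n - 1)) := by
  have hn0 : (0:ℚ) < n := by linarith
  have hn1 : (0:ℚ) < n - 1 := by linarith
  have ha0 : (0:ℚ) ≤ a := by linarith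
  have e1 : a * cC / n ≤ a / 8 := by
    rw [div_le_div_iff₀ hn0 (by norm_num)]
    nlinarith
  have e2 : q2 / (2 * (n - 1)) ≤ 27 * s / 10 := by
    rw [div_le_div_iff₀ (by linarith) (by norm_num)]
    nlinarith
  linarith

lemma binom_base (m j : ℕ) : (m + 1) * m.choose j = (j + 1) * (m + 1).choose (j + 1) := by
  rw [mul_comm (j + 1)]
  simpa [Nat.succ_eq_add_one] using Nat.add_one_mul_choose_eq m j

lemma binom1 (n t : ℕ) (h1 : 1 ≤ t) (h2 : t ≤ n) :
    n * (n - 1).choose (t - 1) = t * n.choose t := by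
  obtain ⟨n', rfl⟩ : ∃ n', n = n' + 1 := ⟨n - 1, by omega⟩
  obtain ⟨t', rfl⟩ : ∃ t', t = t' + 1 := ⟨t - 1, by omega⟩
  simp only [Nat.add_sub_cancel]
  exact binom_base n' t'

lemma binom2 (n t : ℕ) (h1 : 2 ≤ t) (h2 : t ≤ n) :
    (n - 1) * (n - 2).choose (t - 2) = (t - 1) * (n - 1).choose (t - 1) := by
  obtain ⟨n', rfl⟩ : ∃ n', n = n' + 2 := ⟨n - 2, by omega⟩
  obtain ⟨t', rfl⟩ : ∃ t', t = t' + 2 := ⟨t - 2, by omega⟩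
  have e1 : n' + 2 - 1 = n' + 1 := by omega
  have e2 : t' + 2 - 1 = t' + 1 := by omega
  have e3 : n' + 2 - 2 = n' := by omega
  have e4 : t' + 2 - 2 = t' := by omega
  rw [e1, e2, e3, e4]
  exact binom_base n' t'

set_option maxHeartbeats 1600000 in
lemma step_lemma {α : Type*} [AddCommGroup α] [DecidableEq α]
    (Xi Yi C : Finset α) (c1 c2 : ℕ)
    (h1a : 1 ≤ c1) (h1b : c1 ≤ Xi.card) (h2b : c2 ≤ Yi.card)
    (hcc : 16 * Xi.card ≤ c1 * c2) (hXYc : 16 * Xi.card ≤ Yi.card)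
    (hXne : 1 ≤ Xi.card) (hC : 8 * C.card ≤ Yi.card) :
    ∃ X' ⊆ Xi, ∃ Y' ⊆ Yi, X'.card = c1 ∧ Y'.card = c2 ∧
      2 * Xi.card ≤ ((X' + Y') \ C).card := by
  set s := Xi.card with hs
  set n := Yi.card with hn
  -- choose t
  set t : ℕ := (8 * s - 1) / c1 + 1 with htdef
  have hd : c1 * ((8 * s - 1) / c1) + (8 * s - 1) % c1 = 8 * s - 1 := Nat.div_add_mod _ _
  have hr : (8 * s - 1) % c1 < c1 := Nat.mod_lt _ h1a
  have he : c1 * t = c1 * ((8 * s - 1) / c1) + c1 := Nat.mul_succ c1 _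
  have k1 : 8 * s ≤ c1 * t := by
    generalize hA : c1 * ((8 * s - 1) / c1) = A at hd he
    omega
  have k2 : c1 * t ≤ 9 * s := by
    generalize hA : c1 * ((8 * s - 1) / c1) = A at hd he
    omega
  have k3 : t ≤ c2 := by
    have : c1 * t ≤ c1 * c2 := by omega
    exact Nat.le_of_mul_le_mul_left this h1a
  have k4 : 2 ≤ t := by
    have h8 : c1 * 2 ≤ c1 * t := by omega
    exact Nat.le_of_mul_le_mul_left h8 h1a
  have k5 : t ≤ n := k3.trans h2b
  have hn16 : 16 * s ≤ n := hXYc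
  obtain ⟨X0, hX0sub, hX0card⟩ := Finset.exists_subset_card_eq h1b
  set T := Yi.powersetCard t with hT
  set N := n.choose t with hNdef
  have hTcard : T.card = N := by rw [hT, card_powersetCard]
  have hNpos : 0 < N := Nat.choose_pos k5
  set Cn1 := (n - 1).choose (t - 1) with hCn1
  set Cn2 := (n - 2).choose (t - 2) with hCn2
  -- binomial identities
  have hb1 : n * Cn1 = t * N := binom1 n t (by omega) k5
  have hb2 : (n - 1) * Cn2 = (t - 1) * Cn1 := binom2 n t k4 k5
  -- the average bound
  have havg : (N : ℚ) * (2 * s) ≤ ∑ A ∈ T, (((X0 + A) \ C).card : ℚ) := by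
    set F : Finset α → ℚ := fun A => ∑ x ∈ X0, ((A.filter (fun y => x + y ∈ C)).card : ℚ)
      with hF
    set G : Finset α → ℚ :=
        fun A => ∑ q ∈ X0.offDiag, ((A.filter (fun y => y + (q.1 - q.2) ∈ A)).card : ℚ)
      with hG
    have hper : ∀ A ∈ T, (c1 : ℚ) * t - F A - G A / 2 ≤ (((X0 + A) \ C).card : ℚ) := by
      intro A hA
      rw [hT, mem_powersetCard] at hA
      obtain ⟨hAY, hAcard⟩ := hA
      have hsplit : (X0 + A) \ C = X0.biUnion (fun x => (A.image (x + ·)) \ C) := by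
        ext z
        simp only [mem_sdiff, Finset.mem_add, mem_biUnion, mem_image]
        constructor
        · rintro ⟨⟨x, hx, y, hy, rfl⟩, hz⟩
          exact ⟨x, hx, ⟨y, hy, rfl⟩, hz⟩
        · rintro ⟨x, hx, ⟨y, hy, rfl⟩, hz⟩
          exact ⟨⟨x, hx, y, hy, rfl⟩, hz⟩
      rw [hsplit]
      refine le_trans ?_ (bonf X0 (fun x => (A.image (x + ·)) \ C))
      have hBx : ∀ x ∈ X0, (t : ℚ) - ((A.filter (fun y => x + y ∈ C)).card : ℚ)
          ≤ (((A.image (x + ·)) \ C).card : ℚ) := by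
        intro x _
        have himg : (A.image (x + ·)).card = t := by
          rw [Finset.card_image_of_injective _ (add_right_injective x), hAcard]
        have hintC : (A.image (x + ·)) ∩ C = (A.filter (fun y => x + y ∈ C)).image (x + ·) := by
          ext z
          simp only [mem_inter, mem_image, mem_filter]
          constructor
          · rintro ⟨⟨y, hy, rfl⟩, hz⟩
            exact ⟨y, ⟨hy, hz⟩, rfl⟩
          · rintro ⟨y, ⟨hy, hz⟩, rfl⟩
            exact ⟨⟨y, hy, rfl⟩, hz⟩
        have hkey : ((A.image (x + ·)) \ C).card + (A.filter (fun y => x + y ∈ C)).card = t := by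
          rw [← himg]
          rw [← Finset.card_sdiff_add_card_inter (A.image (x + ·)) C]
          congr 1
          rw [hintC, Finset.card_image_of_injective _ (add_right_injective x)]
        have hkq : (((A.image (x + ·)) \ C).card : ℚ)
            + ((A.filter (fun y => x + y ∈ C)).card : ℚ) = (t : ℚ) := by
          exact_mod_cast hkey
        linarith
      have hpairs : ∀ q ∈ X0.offDiag,
          ((((A.image (q.1 + ·)) \ C) ∩ ((A.image (q.2 + ·)) \ C)).card : ℚ)
            ≤ ((A.filter (fun y => y + (q.1 - q.2) ∈ A)).card : ℚ) := by
        rintro ⟨x, x'⟩ _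
        have hiimg : (A.image (x + ·)) ∩ (A.image (x' + ·))
            = (A.filter (fun y => y + (x - x') ∈ A)).image (x + ·) := by
          ext z
          simp only [mem_inter, mem_image, mem_filter]
          constructor
          · rintro ⟨⟨y, hy, rfl⟩, ⟨y', hy', he'⟩⟩
            have h2 : y + (x - x') = y' := by
              have h3 : x' + (y + (x - x')) = x' + y' := by rw [he']; abel
              exact add_left_cancel h3
            exact ⟨y, ⟨hy, h2 ▸ hy'⟩, rfl⟩
          · rintro ⟨y, ⟨hy, hy2⟩, rfl⟩
            exact ⟨⟨y, hy, rfl⟩, ⟨y + (x - x'), hy2, by abel⟩⟩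
        have hsub : ((A.image (x + ·)) \ C) ∩ ((A.image (x' + ·)) \ C)
            ⊆ (A.image (x + ·)) ∩ (A.image (x' + ·)) :=
          Finset.inter_subset_inter sdiff_subset sdiff_subset
        have := Finset.card_le_card hsub
        rw [hiimg, Finset.card_image_of_injective _ (add_right_injective x)] at this
        exact_mod_cast this
      have h1 : (c1 : ℚ) * t - F A ≤ ∑ x ∈ X0, (((A.image (x + ·)) \ C).card : ℚ) := by
        have : ∑ x ∈ X0, ((t : ℚ) - ((A.filter (fun y => x + y ∈ C)).card : ℚ))
            ≤ ∑ x ∈ X0, (((A.image (x + ·)) \ C).card : ℚ) := Finset.sum_le_sum hBx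
        rw [Finset.sum_sub_distrib, Finset.sum_const, hX0card, nsmul_eq_mul] at this
        exact this
      have h2 : ∑ q ∈ X0.offDiag,
            (((fun x => (A.image (x + ·)) \ C) q.1 ∩ (fun x => (A.image (x + ·)) \ C) q.2).card : ℚ)
          ≤ G A := Finset.sum_le_sum hpairs
      linarith
    have hsum0 : ∑ A ∈ T, ((c1 : ℚ) * t - F A - G A / 2) ≤ ∑ A ∈ T, (((X0 + A) \ C).card : ℚ) :=
      Finset.sum_le_sum hper
    have hsplitsum : ∑ A ∈ T, ((c1 : ℚ) * t - F A - G A / 2)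
        = (N : ℚ) * ((c1 : ℚ) * t) - (∑ A ∈ T, F A) - (∑ A ∈ T, G A) / 2 := by
      rw [Finset.sum_sub_distrib, Finset.sum_sub_distrib, Finset.sum_const, hTcard,
        nsmul_eq_mul, Finset.sum_div]
    have hFtot : ∑ A ∈ T, F A ≤ (c1 : ℚ) * C.card * Cn1 := by
      rw [hF, Finset.sum_comm]
      have hx : ∀ x ∈ X0, (∑ A ∈ T, ((A.filter (fun y => x + y ∈ C)).card : ℚ))
          ≤ (C.card : ℚ) * Cn1 := by
        intro x _
        have hnat : ∑ A ∈ T, (A.filter (fun y => x + y ∈ C)).card ≤ C.card * Cn1 := by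
          refine le_trans (sum_filter_le Yi t (by omega) _) ?_
          have hinj : (Yi.filter (fun y => x + y ∈ C)).card ≤ C.card := by
            apply Finset.card_le_card_of_injOn (fun y => x + y)
            · intro y hy
              exact (mem_filter.1 hy).2
            · intro y1 _ y2 _ h
              exact add_left_cancel h
          exact Nat.mul_le_mul_right _ hinj
        calc ∑ A ∈ T, ((A.filter (fun y => x + y ∈ C)).card : ℚ)
            = ((∑ A ∈ T, (A.filter (fun y => x + y ∈ C)).card : ℕ) : ℚ) := by push_cast; rfl
          _ ≤ ((C.card * Cn1 : ℕ) : ℚ) := by exact_mod_cast hnat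
          _ = (C.card : ℚ) * Cn1 := by push_cast; rfl
      calc ∑ x ∈ X0, ∑ A ∈ T, ((A.filter (fun y => x + y ∈ C)).card : ℚ)
          ≤ ∑ _x ∈ X0, (C.card : ℚ) * Cn1 := Finset.sum_le_sum hx
        _ = (c1 : ℚ) * C.card * Cn1 := by
            rw [Finset.sum_const, hX0card, nsmul_eq_mul]; ring
    have hGtot : ∑ A ∈ T, G A ≤ (c1 : ℚ) * c1 * ((n : ℚ) * Cn2) := by
      rw [hG, Finset.sum_comm]
      have hq : ∀ q ∈ X0.offDiag, (∑ A ∈ T, ((A.filter (fun y => y + (q.1 - q.2) ∈ A)).card : ℚ))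
          ≤ (n : ℚ) * Cn2 := by
        rintro ⟨x, x'⟩ hq
        rw [mem_offDiag] at hq
        have hd : x - x' ≠ 0 := sub_ne_zero_of_ne hq.2.2
        have hnat : ∑ A ∈ T, (A.filter (fun y => y + (x - x') ∈ A)).card ≤ n * Cn2 :=
          sum_filter_pair_le Yi t k4 (fun y => y + (x - x'))
            (fun z hz => hd (by simpa using add_eq_left.mp hz))
        calc ∑ A ∈ T, ((A.filter (fun y => y + (x - x') ∈ A)).card : ℚ)
            = ((∑ A ∈ T, (A.filter (fun y => y + (x - x') ∈ A)).card : ℕ) : ℚ) := by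
              push_cast; rfl
          _ ≤ ((n * Cn2 : ℕ) : ℚ) := by exact_mod_cast hnat
          _ = (n : ℚ) * Cn2 := by push_cast; rfl
      calc ∑ q ∈ X0.offDiag, ∑ A ∈ T, ((A.filter (fun y => y + (q.1 - q.2) ∈ A)).card : ℚ)
          ≤ ∑ _q ∈ X0.offDiag, (n : ℚ) * Cn2 := Finset.sum_le_sum hq
        _ = (X0.offDiag.card : ℚ) * ((n : ℚ) * Cn2) := by
            rw [Finset.sum_const, nsmul_eq_mul]
        _ ≤ (c1 : ℚ) * c1 * ((n : ℚ) * Cn2) := by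
            have hoff : X0.offDiag.card ≤ c1 * c1 := by
              rw [Finset.offDiag_card, hX0card]; omega
            have hnn : (0 : ℚ) ≤ (n : ℚ) * Cn2 := by positivity
            have : (X0.offDiag.card : ℚ) ≤ (c1 : ℚ) * c1 := by exact_mod_cast hoff
            nlinarith
    -- numeric part
    have hn0 : (16 : ℚ) ≤ (n : ℚ) := by
      have : 16 ≤ n := le_trans (by omega) hn16
      exact_mod_cast this
    have hnq : (0 : ℚ) < (n : ℚ) := by linarith
    have hn1q : (0 : ℚ) < (n : ℚ) - 1 := by linarith
    have hq1 : (n : ℚ) * Cn1 = (t : ℚ) * N := by exact_mod_cast hb1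
    have hq2' : ((n : ℚ) - 1) * Cn2 = ((t : ℚ) - 1) * Cn1 := by
      have h1n : 1 ≤ n := by omega
      have h1t : 1 ≤ t := by omega
      have := hb2
      have hcast : ((n - 1 : ℕ) : ℚ) * ((Cn2 : ℕ) : ℚ) = ((t - 1 : ℕ) : ℚ) * ((Cn1 : ℕ) : ℚ) := by
        exact_mod_cast this
      rwa [Nat.cast_sub h1n, Nat.cast_sub h1t, Nat.cast_one] at hcast
    have eCn1 : (Cn1 : ℚ) = (t : ℚ) * N / n := by
      field_simp
      linarith [hq1]
    have eCn2 : (Cn2 : ℚ) = ((t : ℚ) - 1) * ((t : ℚ) * N / n) / ((n : ℚ) - 1) := by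
      rw [← eCn1]
      field_simp
      linarith [hq2']
    have key := numeric2 (s : ℚ) (n : ℚ) ((c1 : ℚ) * t) (C.card : ℚ)
      ((c1 : ℚ) ^ 2 * t * ((t : ℚ) - 1))
      (by exact_mod_cast hXne) (by exact_mod_cast hn16)
      (by exact_mod_cast k1) (by exact_mod_cast k2)
      (by exact_mod_cast hC) (by positivity)
      (by
        have ht1 : (1 : ℚ) ≤ (t : ℚ) := by exact_mod_cast (by omega : 1 ≤ t)
        nlinarith [sq_nonneg ((c1 : ℚ) * t)])
      (by
        have ht1 : (1 : ℚ) ≤ (t : ℚ) := by exact_mod_cast (by omega : 1 ≤ t)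
        have h0 : (0 : ℚ) ≤ (c1 : ℚ) ^ 2 * t := by positivity
        nlinarith)
    have hNq : (0 : ℚ) ≤ (N : ℚ) := by positivity
    have hmul := mul_le_mul_of_nonneg_left key hNq
    have hid1 : (c1 : ℚ) * C.card * Cn1 = (N : ℚ) * ((c1 : ℚ) * t * C.card / n) := by
      rw [eCn1]; field_simp
    have hid2 : (c1 : ℚ) * c1 * ((n : ℚ) * Cn2) / 2
        = (N : ℚ) * ((c1 : ℚ) ^ 2 * t * ((t : ℚ) - 1) / (2 * ((n : ℚ) - 1))) := by
      rw [eCn2]; field_simp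
    calc (N : ℚ) * (2 * s) ≤ (N : ℚ) * ((c1 : ℚ) * t - (c1 : ℚ) * t * C.card / n
          - (c1 : ℚ) ^ 2 * t * ((t : ℚ) - 1) / (2 * ((n : ℚ) - 1))) := hmul
      _ = (N : ℚ) * ((c1 : ℚ) * t) - (c1 : ℚ) * C.card * Cn1
          - (c1 : ℚ) * c1 * ((n : ℚ) * Cn2) / 2 := by rw [hid1, hid2]; ring
      _ ≤ ∑ A ∈ T, ((c1 : ℚ) * t - F A - G A / 2) := by rw [hsplitsum]; linarith
      _ ≤ ∑ A ∈ T, (((X0 + A) \ C).card : ℚ) := hsum0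
  -- extract a good A
  have hexists : ∃ A ∈ T, 2 * s ≤ ((X0 + A) \ C).card := by
    by_contra hcon
    push_neg at hcon
    have hsum : ∑ A ∈ T, ((X0 + A) \ C).card ≤ N * (2 * s - 1) := by
      calc ∑ A ∈ T, ((X0 + A) \ C).card ≤ ∑ _A ∈ T, (2 * s - 1) :=
            Finset.sum_le_sum fun A hA => by have := hcon A hA; omega
        _ = N * (2 * s - 1) := by rw [Finset.sum_const, smul_eq_mul, hTcard]
    have hcast : (∑ A ∈ T, (((X0 + A) \ C).card : ℚ)) ≤ (N : ℚ) * (2 * s - 1) := by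
      have := hsum
      have h2s : 1 ≤ 2 * s := by omega
      push_cast [← Nat.cast_sum]
      calc ((∑ A ∈ T, ((X0 + A) \ C).card : ℕ) : ℚ) ≤ ((N * (2 * s - 1) : ℕ) : ℚ) := by
            exact_mod_cast this
        _ = (N : ℚ) * ((2 * s : ℕ) - 1) := by push_cast [Nat.cast_sub h2s]; ring
        _ = (N : ℚ) * (2 * s - 1) := by push_cast; ring
    have : (N : ℚ) * (2 * s) ≤ (N : ℚ) * (2 * s - 1) := le_trans havg hcast
    have hN1 : (1 : ℚ) ≤ N := by exact_mod_cast hNpos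
    nlinarith
  obtain ⟨A, hAT, hAgood⟩ := hexists
  rw [hT, mem_powersetCard] at hAT
  obtain ⟨Y', hAY', hY'Yi, hY'card⟩ :=
    Finset.exists_subsuperset_card_eq hAT.1 (hAT.2 ▸ k3) h2b
  refine ⟨X0, hX0sub, Y', hY'Yi, hX0card, hY'card, ?_⟩
  calc 2 * s ≤ ((X0 + A) \ C).card := hAgood
    _ ≤ ((X0 + Y') \ C).card :=
      Finset.card_le_card (sdiff_subset_sdiff (Finset.add_subset_add_left hAY') le_rfl)

theorem stmt4 (p k : ℕ) (hp : p.Prime) (hk : 0 < k)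
    (X Y : Fin k → Finset (ZMod p)) (Z : Finset (ZMod p))
    (c₁ c₂ : Fin k → ℕ)
    (h1 : ∀ i, 1 ≤ c₁ i ∧ c₁ i ≤ (X i).card)
    (h2 : ∀ i, 1 ≤ c₂ i ∧ c₂ i ≤ (Y i).card)
    (hc : ∀ i, 16 * (X i).card ≤ c₁ i * c₂ i)
    (hXY : ∀ i, 16 * (X i).card ≤ (Y i).card)
    (hZY : ∀ i, 16 * Z.card ≤ (Y i).card)
    (hY : ∀ i, ((Y i).card : ℝ) < (p : ℝ) / 2) :
    ∃ X' : Fin k → Finset (ZMod p), ∃ Y' : Fin k → Finset (ZMod p),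
      (∀ i, X' i ⊆ X i ∧ (X' i).card = c₁ i ∧ Y' i ⊆ Y i ∧ (Y' i).card = c₂ i) ∧
      min (⨅ i : Fin k, ((Y i).card : ℝ) / 16) (2 * ∑ i : Fin k, ((X i).card : ℝ)) ≤
        (((Finset.univ.biUnion fun i => X' i + Y' i) \ Z).card : ℝ) := by
  obtain ⟨i0, -, hi0⟩ := Finset.exists_min_image (univ : Finset (Fin k))
    (fun i => (Y i).card) ⟨⟨0, hk⟩, mem_univ _⟩
  set Nm := (Y i0).card with hNm
  have main : ∀ j : ℕ, j ≤ k → ∃ X' Y' : Fin k → Finset (ZMod p),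
      (∀ i, X' i ⊆ X i ∧ (X' i).card = c₁ i ∧ Y' i ⊆ Y i ∧ (Y' i).card = c₂ i) ∧
      (2 * ∑ i ∈ univ.filter (fun i : Fin k => i.val < j), (X i).card
          ≤ (((univ.filter (fun i : Fin k => i.val < j)).biUnion fun i => X' i + Y' i) \ Z).card
        ∨ Nm ≤ 16 * (((univ.filter (fun i : Fin k => i.val < j)).biUnion
            fun i => X' i + Y' i) \ Z).card) := by
    intro j
    induction j with
    | zero =>
      intro _
      choose f1 hf1 using fun i => Finset.exists_subset_card_eq (h1 i).2
      choose f2 hf2 using fun i => Finset.exists_subset_card_eq (h2 i).2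
      refine ⟨f1, f2, fun i => ⟨(hf1 i).1, (hf1 i).2, (hf2 i).1, (hf2 i).2⟩, Or.inl ?_⟩
      have hempty : univ.filter (fun i : Fin k => i.val < 0) = ∅ := by
        ext i; simp
      rw [hempty]
      simp
    | succ j ih =>
      intro hj
      obtain ⟨X', Y', hvalid, hbound⟩ := ih (by omega)
      have hjk : j < k := by omega
      set jj : Fin k := ⟨j, hjk⟩ with hjj
      set U := ((univ.filter (fun i : Fin k => i.val < j)).biUnion fun i => X' i + Y' i)
        with hU
      have hnotmem : jj ∉ univ.filter (fun i : Fin k => i.val < j) := by simp [hjj]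
      have hfil : univ.filter (fun i : Fin k => i.val < j + 1)
          = insert jj (univ.filter (fun i : Fin k => i.val < j)) := by
        ext i
        simp only [mem_filter, mem_univ, true_and, mem_insert]
        constructor
        · intro h
          rcases Nat.lt_succ_iff_lt_or_eq.mp h with h' | h'
          · exact Or.inr h'
          · exact Or.inl (Fin.ext h')
        · rintro (rfl | h)
          · simp [hjj]
          · omega
      rcases hbound with hb | hb
      · by_cases hcase : 8 * (Z ∪ U).card ≤ (Y jj).card
        · obtain ⟨X0, hX0, Y0, hY0, hX0c, hY0c, hgain⟩ :=
            step_lemma (X jj) (Y jj) (Z ∪ U) (c₁ jj) (c₂ jj) (h1 jj).1 (h1 jj).2 (h2 jj).2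
              (hc jj) (hXY jj) (le_trans (h1 jj).1 (h1 jj).2) hcase
          refine ⟨Function.update X' jj X0, Function.update Y' jj Y0, ?_, Or.inl ?_⟩
          · intro i
            rcases eq_or_ne i jj with rfl | hne
            · simp only [Function.update_self]
              exact ⟨hX0, hX0c, hY0, hY0c⟩
            · rw [Function.update_of_ne hne, Function.update_of_ne hne]
              exact hvalid i
          · have hUeq : ((univ.filter (fun i : Fin k => i.val < j)).biUnion
                fun i => Function.update X' jj X0 i + Function.update Y' jj Y0 i) = U := by
              apply Finset.biUnion_congr rfl
              intro i hi
              have hne : i ≠ jj := fun h => hnotmem (h ▸ hi)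
              rw [Function.update_of_ne hne, Function.update_of_ne hne]
            rw [hfil, Finset.biUnion_insert, Function.update_self, Function.update_self, hUeq,
              Finset.sum_insert hnotmem]
            have hdisj : Disjoint ((X0 + Y0) \ (Z ∪ U)) (U \ Z) := by
              rw [Finset.disjoint_left]
              intro z hz1 hz2
              rw [mem_sdiff, Finset.mem_union] at hz1
              exact hz1.2 (Or.inr (mem_sdiff.mp hz2).1)
            have hsub2 : ((X0 + Y0) \ (Z ∪ U)) ∪ (U \ Z) ⊆ ((X0 + Y0) ∪ U) \ Z := by
              intro z hz
              rw [Finset.mem_union, mem_sdiff, mem_sdiff, Finset.mem_union] at hz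
              rw [mem_sdiff, Finset.mem_union]
              rcases hz with ⟨h1', h2'⟩ | ⟨h1', h2'⟩
              · exact ⟨Or.inl h1', fun hzZ => h2' (Or.inl hzZ)⟩
              · exact ⟨Or.inr h1', h2'⟩
            have hcards : ((X0 + Y0) \ (Z ∪ U)).card + (U \ Z).card
                ≤ (((X0 + Y0) ∪ U) \ Z).card := by
              rw [← Finset.card_union_of_disjoint hdisj]
              exact Finset.card_le_card hsub2
            omega
        · refine ⟨X', Y', hvalid, Or.inr ?_⟩
          have hmono : (U \ Z).card ≤ ((((univ.filter (fun i : Fin k => i.val < j + 1)).biUnion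
              fun i => X' i + Y' i)) \ Z).card := by
            apply Finset.card_le_card
            apply sdiff_subset_sdiff _ le_rfl
            apply Finset.biUnion_subset_biUnion_of_subset_left
            intro i hi
            simp only [mem_filter, mem_univ, true_and] at hi ⊢
            omega
          have hZU : (Z ∪ U).card ≤ Z.card + (U \ Z).card := by
            rw [← Finset.union_sdiff_self_eq_union]
            exact Finset.card_union_le _ _
          have h16 : 16 * Z.card ≤ (Y jj).card := hZY jj
          have hNle : Nm ≤ (Y jj).card := hi0 jj (mem_univ _)
          omega
      · refine ⟨X', Y', hvalid, Or.inr ?_⟩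
        have hmono : (U \ Z).card ≤ ((((univ.filter (fun i : Fin k => i.val < j + 1)).biUnion
            fun i => X' i + Y' i)) \ Z).card := by
          apply Finset.card_le_card
          apply sdiff_subset_sdiff _ le_rfl
          apply Finset.biUnion_subset_biUnion_of_subset_left
          intro i hi
          simp only [mem_filter, mem_univ, true_and] at hi ⊢
          omega
        omega
  obtain ⟨X', Y', hvalid, hbound⟩ := main k le_rfl
  have hfilk : univ.filter (fun i : Fin k => i.val < k) = univ := by
    ext i; simp [i.isLt]
  rw [hfilk] at hbound
  refine ⟨X', Y', hvalid, ?_⟩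
  rcases hbound with hb | hb
  · refine le_trans (min_le_right _ _) ?_
    have : ((2 * ∑ i : Fin k, (X i).card : ℕ) : ℝ)
        ≤ (((univ.biUnion fun i => X' i + Y' i) \ Z).card : ℝ) := by exact_mod_cast hb
    calc 2 * ∑ i : Fin k, ((X i).card : ℝ) = ((2 * ∑ i : Fin k, (X i).card : ℕ) : ℝ) := by
          push_cast; ring
      _ ≤ _ := this
  · refine le_trans (min_le_left _ _) ?_
    have h1' : (⨅ i : Fin k, ((Y i).card : ℝ) / 16) ≤ ((Y i0).card : ℝ) / 16 :=
      ciInf_le (Finite.bddBelow_range _) i0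
    have h2' : ((Nm : ℕ) : ℝ) ≤ 16 * (((univ.biUnion fun i => X' i + Y' i) \ Z).card : ℝ) := by
      exact_mod_cast hb
    rw [← hNm] at h1'
    linarith
end

section
/- For all 0 < α, β < 2⁻¹⁰ the following holds for any prime p. Consider partitions Z_p = I₀ ⊔ I₁ ⊔ I₂ ⊔ I₃ = J₀ ⊔ J₁ ⊔ J₂ ⊔ J₃ into consecutive intervals such that |I₂| + |J₂| ≤ (1 − β/2)p, (α/2)|J₂| ≤ |I₂| ≤ (2/α)|J₂|, min(|I₂|, |J₂|) ≥ 24/β, and ⌊(β/8)p⌋ ≤ min(|I₁|, |I₃|, |J₁|, |J₃|) ≤ max(|I₁|, |I₃|, |J₁|, |J₃|) ≤ (β/4)p. Then there is an integer k ≤ 100/(αβ) and four families of subsets of Z_p, each of size k: {I₀¹, …, I₀ᵏ}, {I₂¹, …, I₂ᵏ}, {J₀¹, …, J₀ᵏ}, {J₂¹, …, J₂ᵏ}, such that ⋃ᵢ I₀ⁱ = I₀, ⋃ᵢ J₀ⁱ = J₀, ⋃ᵢ I₂ⁱ ⊆ I₂, ⋃ᵢ J₂ⁱ ⊆ J₂,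 and for every 1 ≤ i ≤ k the sets I₂ⁱ and J₂ⁱ are intervals with |I₂ⁱ| = |J₂ⁱ| = ⌊(β/24)·min(|I₂|, |J₂|)⌋ and (I₀ⁱ + J₂ⁱ) ∩ (I₂ + J₂) = (J₀ⁱ + I₂ⁱ) ∩ (I₂ + J₂) = ∅. -/
open Finset Pointwise

/-- The interval `{a, a+1, ..., a+n-1}` in `ZMod p`. -/
def zmodInterval (p : ℕ) (a : ZMod p) (n : ℕ) : Finset (ZMod p) :=
  (Finset.range n).image (fun i : ℕ => a + (i : ZMod p))

lemma aux_lt_ceil_mul (a : ℕ) {b : ℕ} (hb : 0 < b) : a < (a / b + 1) * b := by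
  rw [add_mul, one_mul]; exact Nat.lt_div_mul_add hb

lemma zmod_mem {p : ℕ} [NeZero p] {a x : ZMod p} {n : ℕ} (hn : n ≤ p) :
    x ∈ zmodInterval p a n ↔ (x - a).val < n := by
  simp only [zmodInterval, mem_image, mem_range]
  constructor
  · rintro ⟨i, hi, rfl⟩
    rwa [add_sub_cancel_left, ZMod.val_natCast_of_lt (lt_of_lt_of_le hi hn)]
  · intro h
    exact ⟨(x - a).val, h, by rw [ZMod.natCast_rightInverse (x - a)]; ring⟩

lemma zmod_card {p : ℕ} [NeZero p] (a : ZMod p) {n : ℕ} (hn : n ≤ p) :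
    (zmodInterval p a n).card = n := by
  rw [zmodInterval, Finset.card_image_of_injOn, Finset.card_range]
  intro i hi j hj hij
  simp only [mem_coe, mem_range] at hi hj
  have : ((i : ZMod p)).val = ((j : ZMod p)).val := by
    have := add_left_cancel hij; rw [this]
  rwa [ZMod.val_natCast_of_lt (lt_of_lt_of_le hi hn),
    ZMod.val_natCast_of_lt (lt_of_lt_of_le hj hn)] at this

lemma zmod_sub_interval {p : ℕ} {c : ZMod p} {u L n : ℕ} (h : u + L ≤ n) :
    zmodInterval p (c + (u : ZMod p)) L ⊆ zmodInterval p c n := by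
  intro x hx
  simp only [zmodInterval, mem_image, mem_range] at hx ⊢
  obtain ⟨j, hj, rfl⟩ := hx
  exact ⟨u + j, by omega, by push_cast; ring⟩

lemma zmod_add_interval {p : ℕ} {a b : ZMod p} {n m : ℕ} (hn : 1 ≤ n) (hm : 1 ≤ m) :
    zmodInterval p a n + zmodInterval p b m = zmodInterval p (a + b) (n + m - 1) := by
  ext x
  simp only [zmodInterval, Finset.mem_add, mem_image, mem_range]
  constructor
  · rintro ⟨y, ⟨i, hi, rfl⟩, z, ⟨j, hj, rfl⟩, rfl⟩
    exact ⟨i + j, by omega, by push_cast; ring⟩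
  · rintro ⟨t, ht, rfl⟩
    refine ⟨a + (min t (n-1) : ℕ), ⟨min t (n-1), by omega, rfl⟩,
      b + ((t - min t (n-1) : ℕ) : ZMod p), ⟨t - min t (n-1), by omega, rfl⟩, ?_⟩
    have h1 : min t (n-1) + (t - min t (n-1)) = t := by omega
    have h2 : (a + ((min t (n-1) : ℕ) : ZMod p)) + (b + ((t - min t (n-1) : ℕ) : ZMod p))
        = a + b + ((min t (n-1) + (t - min t (n-1)) : ℕ) : ZMod p) := by push_cast; ring
    rw [h2, h1]

lemma key_lemma (p n₀ n₁ n₂ n₃ M L s k : ℕ)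
    (hp : n₀ + n₁ + n₂ + n₃ = p) (hL1 : 1 ≤ L) (hLn₁ : L ≤ n₁) (hLn₃ : L ≤ n₃)
    (hLM : L ≤ M) (hc : n₂ + M + L ≤ p) (hs : s + n₂ + M + L = p + 2)
    (hk : M / s + 2 ≤ k) (v : ℕ) (hv : v < n₀) :
    ∃ i < k, min (i * s) (M - L) + L ≤ M ∧
      n₂ + M - 1 ≤ v + n₂ + n₃ + min (i * s) (M - L) ∧
      v + n₂ + n₃ + min (i * s) (M - L) + L ≤ p := by
  have hs2 : 2 ≤ s := by omega
  set A : ℕ := n₂ + M - 1 - (v + n₂ + n₃) with hA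
  set i : ℕ := (A + s - 1) / s with hi
  have f1 : i * s ≤ A + s - 1 := Nat.div_mul_le_self _ _
  have f2 : A + s - 1 < (i + 1) * s := aux_lt_ceil_mul _ (by omega)
  rw [add_mul, one_mul] at f2
  have hAM : A ≤ M := by omega
  have hik : i < k := by
    have h1 : i ≤ (M + s - 1) / s := Nat.div_le_div_right (by omega)
    have h2 : (M + s - 1) / s = (M - 1) / s + 1 := by
      rw [show M + s - 1 = (M - 1) + s by omega, Nat.add_div_right _ (by omega)]
    have h3 : (M - 1) / s ≤ M / s := Nat.div_le_div_right (by omega)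
    omega
  refine ⟨i, hik, ?_, ?_, ?_⟩
  · omega
  · rcases le_or_gt (i * s) (M - L) with h | h
    · rw [min_eq_left h]; omega
    · rw [min_eq_right (le_of_lt h)]
      by_cases hA0 : A = 0
      · have hi0 : i = 0 := by rw [hi, hA0]; exact Nat.div_eq_of_lt (by omega)
        rw [hi0, zero_mul] at h; omega
      · omega
  · rcases le_or_gt (i * s) (M - L) with h | h
    · rw [min_eq_left h]
      by_cases hA0 : A = 0
      · have : i = 0 := by
          rw [hi, hA0]; exact Nat.div_eq_of_lt (by omega)
        simp only [this, zero_mul]; omega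
      · omega
    · rw [min_eq_right (le_of_lt h)]
      by_cases hA0 : A = 0
      · have hi0 : i = 0 := by rw [hi, hA0]; exact Nat.div_eq_of_lt (by omega)
        rw [hi0, zero_mul] at h; omega
      · omega

lemma cover_lemma (p : ℕ) [NeZero p] (a b : ZMod p) (n₀ n₁ n₂ n₃ m₀ m₁ m₂ m₃ L s k : ℕ)
    (hn : n₀ + n₁ + n₂ + n₃ = p)
    (hL1 : 1 ≤ L) (hLn₁ : L ≤ n₁) (hLn₃ : L ≤ n₃) (hLm₂ : L ≤ m₂)
    (hc : n₂ + m₂ + L ≤ p) (hs : s + n₂ + m₂ + L = p + 2) (hk : m₂ / s + 2 ≤ k)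
    (S : ZMod p) (hS : S = a + b + ((n₀ + n₁ + m₀ + m₁ : ℕ) : ZMod p))
    (T : ℕ) (hT : T = n₂ + m₂ - 1)
    (x : ZMod p) (hx : x ∈ zmodInterval p a n₀) :
    ∃ i : Fin k, ∀ y ∈ zmodInterval p
        (b + ((m₀ + m₁ : ℕ) : ZMod p) + ((min (i.1 * s) (m₂ - L) : ℕ) : ZMod p)) L,
      x + y ∉ zmodInterval p S T := by
  have hn₀p : n₀ ≤ p := by omega
  set v : ℕ := (x - a).val with hvdef
  have hv : v < n₀ := (zmod_mem hn₀p).mp hx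
  obtain ⟨i, hik, h1, h2, h3⟩ :=
    key_lemma p n₀ n₁ n₂ n₃ m₂ L s k hn hL1 hLn₁ hLn₃ hLm₂ hc hs hk v hv
  refine ⟨⟨i, hik⟩, ?_⟩
  intro y hy hmem
  set u : ℕ := min (i * s) (m₂ - L) with hudef
  have hLp : L ≤ p := by omega
  have hj : (y - (b + ((m₀ + m₁ : ℕ) : ZMod p) + (u : ZMod p))).val < L := (zmod_mem hLp).mp hy
  set j : ℕ := (y - (b + ((m₀ + m₁ : ℕ) : ZMod p) + (u : ZMod p))).val with hjdef
  have hTp : T ≤ p := by omega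
  have hval : (x + y - S).val < T := (zmod_mem hTp).mp hmem
  have e1 : ((v : ℕ) : ZMod p) = x - a := ZMod.natCast_rightInverse (x - a)
  have hxv : x = a + (v : ZMod p) := by rw [e1]; ring
  have e2 : ((j : ℕ) : ZMod p) = y - (b + ((m₀ + m₁ : ℕ) : ZMod p) + (u : ZMod p)) :=
    ZMod.natCast_rightInverse _
  have hyv : y = b + ((m₀ + m₁ : ℕ) : ZMod p) + (u : ZMod p) + (j : ZMod p) := by rw [e2]; ring
  have hpz : ((n₀ + n₁ + n₂ + n₃ : ℕ) : ZMod p) = 0 := by rw [hn]; exact ZMod.natCast_self p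
  have hEq : x + y - S = ((v + n₂ + n₃ + u + j : ℕ) : ZMod p) := by
    rw [hS, hxv, hyv]; push_cast at hpz ⊢; linear_combination -hpz
  rw [hEq, ZMod.val_natCast_of_lt (by omega)] at hval
  omega

set_option maxHeartbeats 2000000 in
theorem stmt5 (α β : ℝ) (hα : 0 < α) (hβ : 0 < β)
    (hα' : α < ((2 : ℝ) ^ (10 : ℕ))⁻¹) (hβ' : β < ((2 : ℝ) ^ (10 : ℕ))⁻¹)
    (p : ℕ) (hp : p.Prime)
    (a b : ZMod p) (n₀ n₁ n₂ n₃ m₀ m₁ m₂ m₃ : ℕ)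
    (hn : n₀ + n₁ + n₂ + n₃ = p) (hm : m₀ + m₁ + m₂ + m₃ = p)
    (I₀ I₁ I₂ I₃ J₀ J₁ J₂ J₃ : Finset (ZMod p))
    (hI₀ : I₀ = zmodInterval p a n₀)
    (hI₁ : I₁ = zmodInterval p (a + (n₀ : ZMod p)) n₁)
    (hI₂ : I₂ = zmodInterval p (a + ((n₀ + n₁ : ℕ) : ZMod p)) n₂)
    (hI₃ : I₃ = zmodInterval p (a + ((n₀ + n₁ + n₂ : ℕ) : ZMod p)) n₃)
    (hJ₀ : J₀ = zmodInterval p b m₀)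
    (hJ₁ : J₁ = zmodInterval p (b + (m₀ : ZMod p)) m₁)
    (hJ₂ : J₂ = zmodInterval p (b + ((m₀ + m₁ : ℕ) : ZMod p)) m₂)
    (hJ₃ : J₃ = zmodInterval p (b + ((m₀ + m₁ + m₂ : ℕ) : ZMod p)) m₃)
    (hsum : (I₂.card : ℝ) + J₂.card ≤ (1 - β / 2) * p)
    (hratio₁ : (α / 2) * J₂.card ≤ (I₂.card : ℝ))
    (hratio₂ : (I₂.card : ℝ) ≤ (2 / α) * J₂.card)
    (hmin : 24 / β ≤ ((min I₂.card J₂.card : ℕ) : ℝ))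
    (hlow : Nat.floor ((β / 8) * (p : ℝ)) ≤ min I₁.card (min I₃.card (min J₁.card J₃.card)))
    (hhigh : ((max I₁.card (max I₃.card (max J₁.card J₃.card)) : ℕ) : ℝ) ≤ (β / 4) * p) :
    ∃ k : ℕ, (k : ℝ) ≤ 100 / (α * β) ∧
      ∃ fI₀ fI₂ fJ₀ fJ₂ : Fin k → Finset (ZMod p),
        Finset.univ.biUnion fI₀ = I₀ ∧
        Finset.univ.biUnion fJ₀ = J₀ ∧
        Finset.univ.biUnion fI₂ ⊆ I₂ ∧
        Finset.univ.biUnion fJ₂ ⊆ J₂ ∧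
        ∀ i : Fin k,
          (∃ x : ZMod p, fI₂ i = zmodInterval p x (Nat.floor ((β / 24) * ((min I₂.card J₂.card : ℕ) : ℝ)))) ∧
          (∃ y : ZMod p, fJ₂ i = zmodInterval p y (Nat.floor ((β / 24) * ((min I₂.card J₂.card : ℕ) : ℝ)))) ∧
          (fI₂ i).card = Nat.floor ((β / 24) * ((min I₂.card J₂.card : ℕ) : ℝ)) ∧
          (fJ₂ i).card = Nat.floor ((β / 24) * ((min I₂.card J₂.card : ℕ) : ℝ)) ∧
          (fI₀ i + fJ₂ i) ∩ (I₂ + J₂) = ∅ ∧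
          (fJ₀ i + fI₂ i) ∩ (I₂ + J₂) = ∅ := by
  haveI : NeZero p := ⟨hp.pos.ne'⟩
  have hppos : 0 < p := hp.pos
  subst hI₀ hI₁ hI₂ hI₃ hJ₀ hJ₁ hJ₂ hJ₃
  have cI₁ : (zmodInterval p (a + (n₀ : ZMod p)) n₁).card = n₁ := zmod_card _ (by omega)
  have cI₂ : (zmodInterval p (a + ((n₀ + n₁ : ℕ) : ZMod p)) n₂).card = n₂ := zmod_card _ (by omega)
  have cI₃ : (zmodInterval p (a + ((n₀ + n₁ + n₂ : ℕ) : ZMod p)) n₃).card = n₃ := zmod_card _ (by omega)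
  have cJ₁ : (zmodInterval p (b + (m₀ : ZMod p)) m₁).card = m₁ := zmod_card _ (by omega)
  have cJ₂ : (zmodInterval p (b + ((m₀ + m₁ : ℕ) : ZMod p)) m₂).card = m₂ := zmod_card _ (by omega)
  have cJ₃ : (zmodInterval p (b + ((m₀ + m₁ + m₂ : ℕ) : ZMod p)) m₃).card = m₃ := zmod_card _ (by omega)
  rw [cI₂, cJ₂] at hsum hmin ⊢
  rw [cI₁, cI₃, cJ₁, cJ₃] at hlow
  -- basic real facts
  have hβ1 : β ≤ 1 := by
    have : ((2:ℝ)^(10:ℕ))⁻¹ ≤ 1 := by norm_num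
    linarith
  have hα1 : α ≤ (1:ℝ)/1024 := by
    have : ((2:ℝ)^(10:ℕ))⁻¹ = 1/1024 := by norm_num
    linarith
  have hminn : 0 < min n₂ m₂ := by
    rcases Nat.eq_zero_or_pos (min n₂ m₂) with h | h
    · exfalso; rw [h] at hmin; push_cast at hmin
      have : (0:ℝ) < 24/β := by positivity
      linarith
    · exact h
  classical
  set L := Nat.floor ((β / 24) * ((min n₂ m₂ : ℕ) : ℝ)) with hLdef
  have hminR : (24:ℝ)/β ≤ ((min n₂ m₂ : ℕ) : ℝ) := hmin
  have hminle : ((min n₂ m₂ : ℕ) : ℝ) ≤ (p:ℝ) := by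
    exact_mod_cast (show min n₂ m₂ ≤ p by omega)
  have hppR : (0:ℝ) < p := by exact_mod_cast hppos
  have hL1 : 1 ≤ L := by
    apply Nat.le_floor
    have h24 : (0:ℝ) ≤ β/24 := by positivity
    have he : β/24 * (24/β) = 1 := by field_simp
    have h2 := mul_le_mul_of_nonneg_left hminR h24
    rw [he] at h2
    exact_mod_cast h2
  have hLreal : (L:ℝ) ≤ β/24 * ((min n₂ m₂ : ℕ) : ℝ) := Nat.floor_le (by positivity)
  have hLp24 : (L:ℝ) ≤ β/24 * p := by nlinarith
  have hLmin : L ≤ min n₂ m₂ := by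
    have h1 : (β/24) * ((min n₂ m₂ : ℕ) : ℝ) ≤ ((min n₂ m₂ : ℕ) : ℝ) := by
      nlinarith [show (0:ℝ) ≤ ((min n₂ m₂ : ℕ) : ℝ) from by positivity]
    calc L ≤ ⌊((min n₂ m₂ : ℕ) : ℝ)⌋₊ := Nat.floor_le_floor h1
    _ = min n₂ m₂ := Nat.floor_natCast _
  have hLn₂ : L ≤ n₂ := le_trans hLmin (min_le_left _ _)
  have hLm₂ : L ≤ m₂ := le_trans hLmin (min_le_right _ _)
  have hL8 : L ≤ Nat.floor (β/8 * (p:ℝ)) := Nat.floor_le_floor (by nlinarith)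
  have hLn₁ : L ≤ n₁ := by omega
  have hLn₃ : L ≤ n₃ := by omega
  have hLm₁ : L ≤ m₁ := by omega
  have hLm₃ : L ≤ m₃ := by omega
  have hexp : (1 - β/2) * (p:ℝ) = (p:ℝ) - 1/2*(β*(p:ℝ)) := by ring
  rw [hexp] at hsum
  have ht2 : (L:ℝ) ≤ 1/24*(β*(p:ℝ)) := by
    linarith [show β/24*(p:ℝ) = 1/24*(β*(p:ℝ)) from by ring]
  have hβp : (0:ℝ) < β*(p:ℝ) := by positivity
  have hc : n₂ + m₂ + L ≤ p := by
    have h : ((n₂ + m₂ + L : ℕ) : ℝ) ≤ p := by push_cast; linarith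
    exact_mod_cast h
  set s := p + 2 - (n₂ + m₂ + L) with hsdef
  have hs_eq : s + n₂ + m₂ + L = p + 2 := by omega
  have hsR0 : (s:ℝ) + n₂ + m₂ + L = (p:ℝ) + 2 := by exact_mod_cast hs_eq
  have hsR : (11:ℝ)/24 * (β*(p:ℝ)) + 2 ≤ (s:ℝ) := by linarith
  have hkI : m₂ / s + 2 ≤ max n₂ m₂ / s + 2 :=
    Nat.add_le_add_right (Nat.div_le_div_right (le_max_right n₂ m₂)) 2
  have hkJ : n₂ / s + 2 ≤ max n₂ m₂ / s + 2 :=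
    Nat.add_le_add_right (Nat.div_le_div_right (le_max_left n₂ m₂)) 2
  have hkR : ((max n₂ m₂ / s + 2 : ℕ) : ℝ) ≤ 100 / (α*β) := by
    have h1 : ((max n₂ m₂ / s : ℕ):ℝ) ≤ ((max n₂ m₂ : ℕ) : ℝ)/(s:ℝ) := Nat.cast_div_le
    have h2 : ((max n₂ m₂ : ℕ):ℝ) ≤ p := by exact_mod_cast (show max n₂ m₂ ≤ p by omega)
    have hsp : (0:ℝ) < 11/24*(β*(p:ℝ)) := by positivity
    have h3 : ((max n₂ m₂ : ℕ) : ℝ)/(s:ℝ) ≤ (p:ℝ)/(11/24*(β*(p:ℝ))) :=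
      div_le_div₀ (le_of_lt hppR) h2 hsp (by linarith)
    have h4 : (p:ℝ)/(11/24*(β*(p:ℝ))) = 24/(11*β) := by
      rw [div_eq_div_iff (by positivity) (by positivity)]
      ring
    have h5 : 24/(11*β) + 2 ≤ 5/β := by
      have e1 : 24/(11*β) = (24/11)*(1/β) := by ring
      have e2 : (5:ℝ)/β = 5*(1/β) := by ring
      have h1β : (1:ℝ) ≤ 1/β := by rw [le_div_iff₀ hβ]; linarith
      rw [e1, e2]; linarith
    have h6 : (5:ℝ)/β ≤ 100/(α*β) := by
      rw [div_le_div_iff₀ hβ (by positivity)]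
      nlinarith [mul_le_mul_of_nonneg_right hα1 hβ.le]
    rw [h4] at h3
    push_cast
    linarith
  set T := n₂ + m₂ - 1 with hTdef
  set SS : ZMod p := a + b + ((n₀ + n₁ + m₀ + m₁ : ℕ) : ZMod p) with hSS
  have hIJ : zmodInterval p (a + ((n₀+n₁:ℕ):ZMod p)) n₂ +
      zmodInterval p (b + ((m₀+m₁:ℕ):ZMod p)) m₂ = zmodInterval p SS T := by
    rw [zmod_add_interval (by omega) (by omega)]
    congr 1
    rw [hSS]; push_cast; ring
  refine ⟨max n₂ m₂ / s + 2, hkR,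
    fun i => (zmodInterval p a n₀).filter (fun x => ∀ y ∈ zmodInterval p
      (b + ((m₀+m₁:ℕ):ZMod p) + ((min (i.1*s) (m₂-L):ℕ):ZMod p)) L,
      x + y ∉ zmodInterval p SS T),
    fun i => zmodInterval p (a + ((n₀+n₁:ℕ):ZMod p) + ((min (i.1*s) (n₂-L):ℕ):ZMod p)) L,
    fun i => (zmodInterval p b m₀).filter (fun x => ∀ y ∈ zmodInterval p
      (a + ((n₀+n₁:ℕ):ZMod p) + ((min (i.1*s) (n₂-L):ℕ):ZMod p)) L,
      x + y ∉ zmodInterval p SS T),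
    fun i => zmodInterval p (b + ((m₀+m₁:ℕ):ZMod p) + ((min (i.1*s) (m₂-L):ℕ):ZMod p)) L,
    ?_, ?_, ?_, ?_, ?_⟩
  · apply subset_antisymm
    · exact biUnion_subset.mpr (fun i _ => filter_subset _ _)
    · intro x hx
      obtain ⟨i, hi⟩ := cover_lemma p a b n₀ n₁ n₂ n₃ m₀ m₁ m₂ m₃ L s _ hn
        hL1 hLn₁ hLn₃ hLm₂ hc hs_eq hkI SS hSS T hTdef x hx
      exact mem_biUnion.mpr ⟨i, mem_univ _, mem_filter.mpr ⟨hx, hi⟩⟩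
  · apply subset_antisymm
    · exact biUnion_subset.mpr (fun i _ => filter_subset _ _)
    · intro x hx
      obtain ⟨i, hi⟩ := cover_lemma p b a m₀ m₁ m₂ m₃ n₀ n₁ n₂ n₃ L s _ hm
        hL1 hLm₁ hLm₃ hLn₂ (by omega) (by omega) hkJ SS
        (by rw [hSS]; push_cast; ring) T (by omega) x hx
      exact mem_biUnion.mpr ⟨i, mem_univ _, mem_filter.mpr ⟨hx, hi⟩⟩
  · apply biUnion_subset.mpr
    intro i _
    apply zmod_sub_interval
    generalize (i.1 * s) = q
    omega
  · apply biUnion_subset.mpr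
    intro i _
    apply zmod_sub_interval
    generalize (i.1 * s) = q
    omega
  · intro i
    refine ⟨⟨_, rfl⟩, ⟨_, rfl⟩, zmod_card _ (by omega), zmod_card _ (by omega), ?_, ?_⟩
    · rw [hIJ]
      apply Finset.eq_empty_iff_forall_notMem.mpr
      rintro z hz
      rw [Finset.mem_inter, Finset.mem_add] at hz
      obtain ⟨⟨x, hx, y, hy, rfl⟩, hz2⟩ := hz
      exact (Finset.mem_filter.mp hx).2 y hy hz2
    · rw [hIJ]
      apply Finset.eq_empty_iff_forall_notMem.mpr
      rintro z hz
      rw [Finset.mem_inter, Finset.mem_add] at hz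
      obtain ⟨⟨x, hx, y, hy, rfl⟩, hz2⟩ := hz
      exact (Finset.mem_filter.mp hx).2 y hy hz2
end
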